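/- Let ℐ be a finite set, let N ≥ 1, and let {P_i^{a,n}}_{(a,n)∈ℐ×ℤ} for i = 1,…,N and {Q^{a,n}}_{(a,n)∈ℐ×ℤ} be collections of polynomials with widening gap. Then for each (a,n) the multiple sum Σ over (b₁,m₁),…,(b_N,m_N) ∈ ℐ×ℤ of P₁^{b₁,m₁}⋯P_N^{b_N,m_N} · ∂^N Q^{a,n} / (∂X^{b₁,m₁}⋯∂X^{b_N,m_N}) has only finitely many nonzero terms, and the resulting collection indexed by (a,n) has widening gap. -/

import Mathlib

open MvPolynomial

/-- 'Widening gap' for a collection of polynomials in `ℂ[X^{b,m}]_{(b,m)∈ℐ×ℤ}`. -/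
def WideningGap {ι : Type*} (P : ι × ℤ → MvPolynomial (ι × ℤ) ℂ) : Prop :=
  ∀ K : ℤ, 1 ≤ K →
    {n : ℤ | ¬ ∀ a : ι,
      P (a, n) ∈ MvPolynomial.supported ℂ {bm : ι × ℤ | |bm.2| < |n| - K}}.Finite

/-- The iterated partial derivative `∂^N q / (∂X^{b 0} ⋯ ∂X^{b (N-1)})`. -/
noncomputable def iterPDeriv {ι : Type*} {N : ℕ} (b : Fin N → ι × ℤ)
    (q : MvPolynomial (ι × ℤ) ℂ) : MvPolynomial (ι × ℤ) ℂ :=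
  (List.ofFn b).foldr (fun v acc => MvPolynomial.pderiv v acc) q

lemma pderiv_mem_supported {σ : Type*} {s : Set σ} {p : MvPolynomial σ ℂ}
    (hp : p ∈ supported ℂ s) (v : σ) : pderiv v p ∈ supported ℂ s := by
  induction hp using Algebra.adjoin_induction with
  | mem x hx =>
    obtain ⟨i, hi, rfl⟩ := hx
    rcases eq_or_ne i v with rfl | h
    · rw [pderiv_X_self]; exact one_mem _
    · rw [pderiv_X_of_ne h]; exact zero_mem _
  | algebraMap r => simp only [algebraMap_eq, pderiv_C]; exact zero_mem _
  | add x y hx hy ihx ihy => rw [map_add]; exact add_mem ihx ihy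
  | mul x y hx hy ihx ihy =>
    rw [pderiv_mul]
    exact add_mem (mul_mem ihx hy) (mul_mem hx ihy)

lemma foldr_pderiv_mem_supported {σ : Type*} {s : Set σ} {p : MvPolynomial σ ℂ}
    (hp : p ∈ supported ℂ s) (l : List σ) :
    l.foldr (fun v acc => pderiv v acc) p ∈ supported ℂ s := by
  induction l with
  | nil => exact hp
  | cons v l ih => exact pderiv_mem_supported ih v

lemma foldr_pderiv_eq_zero {σ : Type*} {s : Set σ} {p : MvPolynomial σ ℂ}
    (hp : p ∈ supported ℂ s) {v : σ} (hv : v ∉ s) {l : List σ} (hvl : v ∈ l) :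
    l.foldr (fun v acc => pderiv v acc) p = 0 := by
  induction l with
  | nil => simp at hvl
  | cons w l ih =>
    rcases List.mem_cons.mp hvl with rfl | h
    · exact pderiv_eq_zero_of_notMem_vars fun hmem =>
        hv (mem_supported.mp (foldr_pderiv_mem_supported hp l) hmem)
    · show pderiv w (l.foldr (fun v acc => pderiv v acc) p) = 0
      rw [ih h, map_zero]

lemma iterPDeriv_mem_supported {ι : Type*} {N : ℕ} {s : Set (ι × ℤ)}
    {q : MvPolynomial (ι × ℤ) ℂ} (hq : q ∈ supported ℂ s) (b : Fin N → ι × ℤ) :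
    iterPDeriv b q ∈ supported ℂ s :=
  foldr_pderiv_mem_supported hq _

lemma iterPDeriv_ne_zero_mem_vars {ι : Type*} {N : ℕ} {b : Fin N → ι × ℤ}
    {q : MvPolynomial (ι × ℤ) ℂ} (h : iterPDeriv b q ≠ 0) (i : Fin N) :
    b i ∈ q.vars := by
  by_contra hbi
  exact h (foldr_pderiv_eq_zero (mem_supported.mpr subset_rfl) hbi
    (List.mem_ofFn.mpr ⟨i, rfl⟩))

/-- If `{P_i^{a,n}}` (for `i = 1,…,N`) and `{Q^{a,n}}` have widening gap, then for
each `(a,n)` the multiple sum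
`Σ_{(b₁,m₁),…,(b_N,m_N)} P₁^{b₁,m₁}⋯P_N^{b_N,m_N} · ∂^N Q^{a,n}/(∂X^{b₁,m₁}⋯∂X^{b_N,m_N})`
has only finitely many nonzero terms, and the resulting collection again has
widening gap. -/
theorem stmt3 {ι : Type*} [Fintype ι] (N : ℕ) (hN : 1 ≤ N)
    (P : Fin N → ι × ℤ → MvPolynomial (ι × ℤ) ℂ)
    (Q : ι × ℤ → MvPolynomial (ι × ℤ) ℂ)
    (hP : ∀ i, WideningGap (P i)) (hQ : WideningGap Q) :
    (∀ an : ι × ℤ,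
      {b : Fin N → ι × ℤ |
        (∏ i : Fin N, P i (b i)) * iterPDeriv b (Q an) ≠ 0}.Finite) ∧
    WideningGap (fun an =>
      ∑ᶠ b : Fin N → ι × ℤ, (∏ i : Fin N, P i (b i)) * iterPDeriv b (Q an)) := by
  have part1 : ∀ an : ι × ℤ,
      {b : Fin N → ι × ℤ |
        (∏ i : Fin N, P i (b i)) * iterPDeriv b (Q an) ≠ 0}.Finite := by
    intro an
    refine (Set.Finite.pi (t := fun _ : Fin N => (↑(Q an).vars : Set (ι × ℤ)))
      (fun _ => (Q an).vars.finite_toSet)).subset ?_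
    intro b hb
    have hiter : iterPDeriv b (Q an) ≠ 0 := by
      intro h; exact hb (by rw [h, mul_zero])
    intro i _
    exact iterPDeriv_ne_zero_mem_vars hiter i
  refine ⟨part1, ?_⟩
  intro K hK
  -- exceptional sets for the P i at level 1
  set E : Fin N → Set ℤ := fun i => {n : ℤ | ¬ ∀ a : ι,
    P i (a, n) ∈ supported ℂ {bm : ι × ℤ | |bm.2| < |n| - 1}} with hE
  have hEfin : ∀ i, (E i).Finite := fun i => hP i 1 le_rfl
  -- the variables occurring in the exceptional P's
  set T : Set (ι × ℤ) := ⋃ i : Fin N, ⋃ a : ι, ⋃ m ∈ E i,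
    (↑((P i (a, m)).vars) : Set (ι × ℤ)) with hT
  have hTfin : T.Finite :=
    Set.finite_iUnion fun i => Set.finite_iUnion fun a =>
      (hEfin i).biUnion fun m _ => (P i (a, m)).vars.finite_toSet
  set M : ℕ := hTfin.toFinset.sup (fun v => v.2.natAbs) with hM
  have hTM : ∀ v ∈ T, |v.2| ≤ (M : ℤ) := by
    intro v hv
    have : v.2.natAbs ≤ M :=
      Finset.le_sup (f := fun v : ι × ℤ => v.2.natAbs) (hTfin.mem_toFinset.mpr hv)
    calc |v.2| = (v.2.natAbs : ℤ) := (Int.abs_eq_natAbs _)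
    _ ≤ (M : ℤ) := by exact_mod_cast this
  have hfin2 : {n : ℤ | |n| ≤ (M : ℤ) + K}.Finite :=
    (Set.finite_Icc (-((M : ℤ) + K)) ((M : ℤ) + K)).subset
      (fun n hn => Set.mem_Icc.mpr (abs_le.mp hn))
  refine ((hQ (K + 2) (by linarith)).union hfin2).subset ?_
  intro n hn
  by_contra hcon
  simp only [Set.mem_union, Set.mem_setOf_eq, not_or, not_not, not_le] at hcon
  obtain ⟨hnQ, hnM⟩ := hcon
  apply hn
  intro a
  -- the target support set and the smaller one
  set S : Set (ι × ℤ) := {bm : ι × ℤ | |bm.2| < |n| - K} with hS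
  set S' : Set (ι × ℤ) := {bm : ι × ℤ | |bm.2| < |n| - (K + 2)} with hS'
  have hS'S : S' ⊆ S := fun v hv => by
    simp only [hS, hS', Set.mem_setOf_eq] at hv ⊢; linarith
  have hQmem : Q (a, n) ∈ supported ℂ S' := hnQ a
  have hfin : (Function.support fun b : Fin N → ι × ℤ =>
      (∏ i : Fin N, P i (b i)) * iterPDeriv b (Q (a, n))).Finite := part1 (a, n)
  show (∑ᶠ b : Fin N → ι × ℤ, (∏ i : Fin N, P i (b i)) * iterPDeriv b (Q (a, n))) ∈
    supported ℂ S
  rw [finsum_eq_sum _ hfin]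
  apply sum_mem
  intro b hb
  have hb0 : (∏ i : Fin N, P i (b i)) * iterPDeriv b (Q (a, n)) ≠ 0 :=
    hfin.mem_toFinset.mp hb
  have hiter : iterPDeriv b (Q (a, n)) ≠ 0 := by
    intro h; exact hb0 (by rw [h, mul_zero])
  have hbS' : ∀ i, b i ∈ S' := fun i =>
    mem_supported.mp hQmem (iterPDeriv_ne_zero_mem_vars hiter i)
  refine mul_mem (prod_mem fun i _ => ?_)
    (supported_mono hS'S (iterPDeriv_mem_supported hQmem b))
  -- each P i (b i) lies in supported ℂ S
  by_cases hm : (b i).2 ∈ E i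
  · -- exceptional index: use the global bound M
    rw [mem_supported]
    intro v hv
    have hvT : v ∈ T := by
      refine Set.mem_iUnion.mpr ⟨i, Set.mem_iUnion.mpr ⟨(b i).1, ?_⟩⟩
      exact Set.mem_biUnion hm (by rwa [Prod.mk.eta])
    have := hTM v hvT
    show |v.2| < |n| - K
    linarith
  · -- non-exceptional index
    simp only [hE, Set.mem_setOf_eq, not_not] at hm
    have := hm (b i).1
    rw [Prod.mk.eta] at this
    refine supported_mono ?_ this
    intro v hv
    have hbi : |(b i).2| < |n| - (K + 2) := hbS' i
    simp only [Set.mem_setOf_eq] at hv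
    show |v.2| < |n| - K
    linarith
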